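/- Every merge-and-split iteration terminates: there is no infinite sequence of partitions P₀, P₁, P₂, … of the finite player set N in which, for every k, the partition P_{k+1} is obtained from P_k by a single applicable merge operation or a single applicable split operation. -/
import Mathlib


open Finset

/-- A collection over `K`: a finite family of pairwise disjoint nonempty coalitions
whose union is `K`. -/
def IsCollection {N : Type*} [DecidableEq N] (C : Finset (Finset N)) (K : Finset N) : Prop :=
  (∀ S ∈ C, S.Nonempty) ∧
  (∀ S ∈ C, ∀ T ∈ C, S ≠ T → Disjoint S T) ∧
  C.sup id = K

/-- A partition of the (finite) player set `N`. -/
def IsPartition {N : Type*} [Fintype N] [DecidableEq N] (P : Finset (Finset N)) : Prop :=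
  IsCollection P Finset.univ

/-- Payoff of player `i` in collection `C`: `φ S i` for the (unique) coalition `S ∈ C`
containing `i`. -/
noncomputable def payoffIn {N : Type*} (φ : Finset N → N → ℝ)
    (C : Finset (Finset N)) (i : N) : ℝ :=
  letI := Classical.dec (∃ S, S ∈ C ∧ i ∈ S)
  if h : ∃ S, S ∈ C ∧ i ∈ S then φ h.choose i else 0

/-- `C₁` Pareto-dominates `C₂` over the subset `K` (written `C₁ ▷ C₂`). -/
def ParetoDom {N : Type*} (φ : Finset N → N → ℝ) (K : Finset N)
    (C₁ C₂ : Finset (Finset N)) : Prop :=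
  (∀ i ∈ K, payoffIn φ C₂ i ≤ payoffIn φ C₁ i) ∧
  (∃ i ∈ K, payoffIn φ C₂ i < payoffIn φ C₁ i)

/-- `P'` is obtained from `P` by a single applicable merge operation: a subfamily
`F ⊆ P` with at least two coalitions is replaced by its union, and
`{⋃ F} ▷ F` over the union. -/
def MergeStep {N : Type*} [DecidableEq N] (φ : Finset N → N → ℝ)
    (P P' : Finset (Finset N)) : Prop :=
  ∃ F : Finset (Finset N), F ⊆ P ∧ 2 ≤ F.card ∧
    P' = (P \ F) ∪ {F.sup id} ∧
    ParetoDom φ (F.sup id) {F.sup id} F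

/-- `P'` is obtained from `P` by a single applicable split operation: a coalition
`S ∈ P` is replaced by a collection `C` over `S` with at least two coalitions, and
`C ▷ {S}` over `S`. -/
def SplitStep {N : Type*} [DecidableEq N] (φ : Finset N → N → ℝ)
    (P P' : Finset (Finset N)) : Prop :=
  ∃ S ∈ P, ∃ C : Finset (Finset N), IsCollection C S ∧ 2 ≤ C.card ∧
    P' = P.erase S ∪ C ∧
    ParetoDom φ S C {S}

/-- No merge and no split operation is applicable to `P`. -/
def MergeSplitProof {N : Type*} [DecidableEq N] (φ : Finset N → N → ℝ)
    (P : Finset (Finset N)) : Prop :=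
  ∀ P', ¬ MergeStep φ P P' ∧ ¬ SplitStep φ P P'

/-- Collection `C` defects from partition `P`. -/
def Defects {N : Type*} [DecidableEq N] (φ : Finset N → N → ℝ)
    (C P : Finset (Finset N)) : Prop :=
  (∀ i ∈ C.sup id, payoffIn φ P i ≤ payoffIn φ C i) ∧
  (∃ i ∈ C.sup id, payoffIn φ P i < payoffIn φ C i)

/-- `P` is `D_hp`-stable: no collection obtainable from `P` by a single merge or
split operation defects from `P`. -/
def DhpStable {N : Type*} [DecidableEq N] (φ : Finset N → N → ℝ)
    (P : Finset (Finset N)) : Prop :=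
  ∀ P', (MergeStep φ P P' ∨ SplitStep φ P P') → ¬ Defects φ P' P

/-- `P` is `D_c`-stable: no collection over any nonempty subset of `N` defects from `P`. -/
def DcStable {N : Type*} [Fintype N] [DecidableEq N] (φ : Finset N → N → ℝ)
    (P : Finset (Finset N)) : Prop :=
  ∀ K : Finset N, K.Nonempty → ∀ C : Finset (Finset N), IsCollection C K →
    ¬ Defects φ C P


lemma payoffIn_eq {N : Type*} (φ : Finset N → N → ℝ) {C : Finset (Finset N)}
    {S : Finset N} {i : N} (hS : S ∈ C) (hi : i ∈ S)
    (huniq : ∀ T ∈ C, i ∈ T → T = S) : payoffIn φ C i = φ S i := by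
  have h : ∃ T, T ∈ C ∧ i ∈ T := ⟨S, hS, hi⟩
  simp only [payoffIn]
  rw [dif_pos h]
  rw [huniq h.choose h.choose_spec.1 h.choose_spec.2]

lemma payoffIn_partition {N : Type*} [DecidableEq N] (φ : Finset N → N → ℝ)
    {P : Finset (Finset N)} {K : Finset N} (hP : IsCollection P K)
    {S : Finset N} {i : N} (hS : S ∈ P) (hi : i ∈ S) :
    payoffIn φ P i = φ S i := by
  refine payoffIn_eq φ hS hi (fun T hT hiT => ?_)
  by_contra hne
  exact Finset.disjoint_left.mp (hP.2.1 T hT S hS hne) hiT hi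

lemma step_improves {N : Type*} [Fintype N] [DecidableEq N] (φ : Finset N → N → ℝ)
    {P P' : Finset (Finset N)} (hP : IsPartition P) (hP' : IsPartition P')
    (h : MergeStep φ P P' ∨ SplitStep φ P P') :
    (∀ i : N, payoffIn φ P i ≤ payoffIn φ P' i) ∧
      (∃ i : N, payoffIn φ P i < payoffIn φ P' i) := by
  obtain ⟨F, hFP, _, hPeq, hdom⟩ | ⟨S, hSP, C, hC, _, hPeq, hdom⟩ := h
  · -- merge
    have key : ∀ i ∈ F.sup id, payoffIn φ P i = payoffIn φ F i ∧
        payoffIn φ P' i = payoffIn φ {F.sup id} i := by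
      intro i hiU
      obtain ⟨T, hTF, hiT⟩ := Finset.mem_sup.mp hiU
      constructor
      · rw [payoffIn_partition φ hP (hFP hTF) hiT,
          payoffIn_eq φ hTF hiT (fun T' hT' hiT' => ?_)]
        by_contra hne
        exact Finset.disjoint_left.mp (hP.2.1 T' (hFP hT') T (hFP hTF) hne) hiT' hiT
      · have hUmem : F.sup id ∈ P' := by
          rw [hPeq]; exact Finset.mem_union_right _ (Finset.mem_singleton_self _)
        rw [payoffIn_partition φ hP' hUmem hiU,
          payoffIn_eq φ (Finset.mem_singleton_self _) hiU
            (fun T' hT' _ => Finset.mem_singleton.mp hT')]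
    constructor
    · intro i
      by_cases hiU : i ∈ F.sup id
      · obtain ⟨h1, h2⟩ := key i hiU
        rw [h1, h2]; exact hdom.1 i hiU
      · -- unaffected player
        have hiuniv : i ∈ (Finset.univ : Finset N) := Finset.mem_univ i
        rw [← hP.2.2] at hiuniv
        obtain ⟨T, hTP, hiT⟩ := Finset.mem_sup.mp hiuniv
        have hTF : T ∉ F := fun hTF => hiU (Finset.mem_sup.mpr ⟨T, hTF, hiT⟩)
        have hTP' : T ∈ P' := by
          rw [hPeq]; exact Finset.mem_union_left _ (Finset.mem_sdiff.mpr ⟨hTP, hTF⟩)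
        rw [payoffIn_partition φ hP hTP hiT, payoffIn_partition φ hP' hTP' hiT]
    · obtain ⟨i, hiU, hlt⟩ := hdom.2
      obtain ⟨h1, h2⟩ := key i hiU
      exact ⟨i, by rw [h1, h2]; exact hlt⟩
  · -- split
    have key : ∀ i ∈ S, payoffIn φ P i = payoffIn φ ({S} : Finset (Finset N)) i ∧
        payoffIn φ P' i = payoffIn φ C i := by
      intro i hiS
      have hiU : i ∈ C.sup id := by rw [hC.2.2]; exact hiS
      obtain ⟨T, hTC, hiT⟩ := Finset.mem_sup.mp hiU
      constructor
      · rw [payoffIn_partition φ hP hSP hiS,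
          payoffIn_eq φ (Finset.mem_singleton_self S) hiS
            (fun T' hT' _ => Finset.mem_singleton.mp hT')]
      · have hTP' : T ∈ P' := by rw [hPeq]; exact Finset.mem_union_right _ hTC
        rw [payoffIn_partition φ hP' hTP' hiT, payoffIn_partition φ hC hTC hiT]
    constructor
    · intro i
      by_cases hiS : i ∈ S
      · obtain ⟨h1, h2⟩ := key i hiS
        rw [h1, h2]; exact hdom.1 i hiS
      · have hiuniv : i ∈ (Finset.univ : Finset N) := Finset.mem_univ i
        rw [← hP.2.2] at hiuniv
        obtain ⟨T, hTP, hiT⟩ := Finset.mem_sup.mp hiuniv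
        have hTS : T ≠ S := fun h => hiS (h ▸ hiT)
        have hTP' : T ∈ P' := by
          rw [hPeq]; exact Finset.mem_union_left _ (Finset.mem_erase.mpr ⟨hTS, hTP⟩)
        rw [payoffIn_partition φ hP hTP hiT, payoffIn_partition φ hP' hTP' hiT]
    · obtain ⟨i, hiS, hlt⟩ := hdom.2
      obtain ⟨h1, h2⟩ := key i hiS
      exact ⟨i, by rw [h1, h2]; exact hlt⟩

/-- Every merge-and-split iteration terminates: there is no infinite sequence of
partitions of the finite player set `N` in which each partition is obtained from the
previous one by a single applicable merge or split operation. -/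
theorem merge_split_terminates {N : Type*} [Fintype N] [DecidableEq N]
    (φ : Finset N → N → ℝ) :
    ¬ ∃ P : ℕ → Finset (Finset N),
        (∀ k, IsPartition (P k)) ∧
        (∀ k, MergeStep φ (P k) (P (k + 1)) ∨ SplitStep φ (P k) (P (k + 1))) := by
  rintro ⟨P, hpart, hstep⟩
  set f : ℕ → ℝ := fun k => ∑ i, payoffIn φ (P k) i with hf
  have hmono : StrictMono f := by
    apply strictMono_nat_of_lt_succ
    intro k
    obtain ⟨hle, i₀, hlt⟩ := step_improves φ (hpart k) (hpart (k + 1)) (hstep k)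
    exact Finset.sum_lt_sum (fun i _ => hle i) ⟨i₀, Finset.mem_univ i₀, hlt⟩
  have hrange : Set.range f ⊆ Set.range (fun Q : Finset (Finset N) => ∑ i, payoffIn φ Q i) := by
    rintro x ⟨k, rfl⟩; exact ⟨P k, rfl⟩
  have hfin : (Set.range f).Finite :=
    (Set.finite_range _).subset hrange
  exact Set.infinite_range_of_injective hmono.injective hfin
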